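/- Let I be a Borel-fixed monomial ideal in R = k[x_1,...,x_n] and let x^A be a monomial of degree t. If the dimension over k of the degree-t graded piece of R/I is strictly less than the number of monomials that Borel-specialize to x^A, then x^A belongs to I. -/

import Mathlib

open MvPolynomial

noncomputable section

/-- The total degree of a monomial exponent vector. -/
def monDeg {n : ℕ} (A : Fin n →₀ ℕ) : ℕ := A.sum fun _ e => e

/-- `BorelSpec A B` : the monomial `x^B` is a Borel specialization of `x^A`,
i.e. `x^B` is obtained from `x^A` by replacing every variable `x_i` of `x^A`
by a variable `x_{f i}` with `f i ≤ i`. -/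
def BorelSpec {n : ℕ} (A B : Fin n →₀ ℕ) : Prop :=
  ∃ f : Fin n → Fin n, (∀ i, f i ≤ i) ∧ B = A.mapDomain f

/-- `borelPSet A` : the set of (exponent vectors of) monomials that can be
Borel-specialized to `x^A`. -/
def borelPSet {n : ℕ} (A : Fin n →₀ ℕ) : Set (Fin n →₀ ℕ) := {C | BorelSpec C A}

/-- A monomial ideal: an ideal generated by monomials. -/
def IsMonomialIdeal {k : Type*} [Field k] {n : ℕ} (I : Ideal (MvPolynomial (Fin n) k)) : Prop :=
  ∃ S : Set (Fin n →₀ ℕ), I = Ideal.span ((fun A => (monomial A (1 : k))) '' S)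

/-- Borel-fixed: `I` is fixed by every invertible linear substitution sending each
variable `x_i` to a linear combination of the variables `x_j` with `j ≤ i`
(the Borel group of upper triangular invertible matrices). -/
def IsBorelFixed {k : Type*} [Field k] {n : ℕ} (I : Ideal (MvPolynomial (Fin n) k)) : Prop :=
  ∀ g : Matrix (Fin n) (Fin n) k, IsUnit g.det → (∀ i j : Fin n, i < j → g i j = 0) →
    I.map (aeval (fun i => ∑ j, MvPolynomial.C (g i j) * X j) :
      MvPolynomial (Fin n) k →ₐ[k] MvPolynomial (Fin n) k) = I

/-- The Hilbert function `t ↦ dim_k (R/I)_t`. -/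
def hilb {k : Type*} [Field k] {n : ℕ} (I : Ideal (MvPolynomial (Fin n) k)) (t : ℕ) : ℕ :=
  Module.finrank k
    ((homogeneousSubmodule (Fin n) k t).map (Ideal.Quotient.mkₐ k I).toLinearMap)

/-- `Q` generates a reduction of `R/I` : `(Q + I)_t = R_t` for all large `t`. -/
def IsReductionOf {k : Type*} [Field k] {n : ℕ} (Q I : Ideal (MvPolynomial (Fin n) k)) : Prop :=
  ∃ N : ℕ, ∀ t ≥ N, ∀ p : MvPolynomial (Fin n) k, p.IsHomogeneous t → p ∈ Q ⊔ I

/-- The reduction number `r_Q(R/I)` : the least `r` such that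
`(Q + I)_t = R_t` for all `t > r`. -/
def redNum {k : Type*} [Field k] {n : ℕ} (Q I : Ideal (MvPolynomial (Fin n) k)) : ℕ :=
  sInf {r : ℕ | ∀ t > r, ∀ p : MvPolynomial (Fin n) k, p.IsHomogeneous t → p ∈ Q ⊔ I}

/-- `Q` is an `s`-reduction of `R/I` : it is generated by `s` linear forms and is a
reduction of `R/I`. -/
def IsSReduction {k : Type*} [Field k] {n : ℕ} (s : ℕ)
    (Q I : Ideal (MvPolynomial (Fin n) k)) : Prop :=
  (∃ z : Fin s → MvPolynomial (Fin n) k,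
      (∀ i, (z i).IsHomogeneous 1) ∧ Q = Ideal.span (Set.range z)) ∧
  IsReductionOf Q I

/-- The `s`-reduction number `r_s(R/I)` : the minimum of `r_Q(R/I)` over all
`s`-reductions `Q` of `R/I`. -/
def sRedNum {k : Type*} [Field k] {n : ℕ} (s : ℕ) (I : Ideal (MvPolynomial (Fin n) k)) : ℕ :=
  sInf {r : ℕ | ∃ Q, IsSReduction s Q I ∧ redNum Q I = r}

/-- Strong stability condition on a monomial ideal: if `x^A ∈ I` is divisible by `x_i`,
then `x^A x_j / x_i ∈ I` for all `j ≤ i`. -/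
def StronglyStable {k : Type*} [Field k] {n : ℕ} (I : Ideal (MvPolynomial (Fin n) k)) : Prop :=
  ∀ (A : Fin n →₀ ℕ) (i j : Fin n), monomial A (1 : k) ∈ I → A i ≠ 0 → j ≤ i →
    monomial (A - Finsupp.single i 1 + Finsupp.single j 1) (1 : k) ∈ I

/-- Lex-segment condition: if `x^A ∈ I` and `x^B ≥ x^A` in the lexicographic order
(with `x_1 > x_2 > ⋯ > x_n`) and `deg x^B = deg x^A`, then `x^B ∈ I`. -/
def IsLexSegment {k : Type*} [Field k] {n : ℕ} (I : Ideal (MvPolynomial (Fin n) k)) : Prop :=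
  ∀ A B : Fin n →₀ ℕ, monomial A (1 : k) ∈ I → monDeg B = monDeg A →
    Finsupp.Lex (· < ·) (· < ·) A B → monomial B (1 : k) ∈ I

/-- A homogeneous ideal: closed under taking homogeneous components. -/
def IsHomogeneousIdeal {k : Type*} [Field k] {n : ℕ} (I : Ideal (MvPolynomial (Fin n) k)) : Prop :=
  ∀ p ∈ I, ∀ t : ℕ, homogeneousComponent t p ∈ I

/-- The ideal generated by the last `s` variables `x_{n-s+1}, …, x_n`. -/
def lastVars (k : Type*) [Field k] (n s : ℕ) : Ideal (MvPolynomial (Fin n) k) :=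
  Ideal.span ((fun i => (X i : MvPolynomial (Fin n) k)) '' {i : Fin n | n - s ≤ (i : ℕ)})



section BorelAux

variable {k : Type*} [Field k] {n : ℕ}

theorem aux_mem_of_support {I : Ideal (MvPolynomial (Fin n) k)} (hmon : IsMonomialIdeal I)
    {p : MvPolynomial (Fin n) k} (hp : p ∈ I) {m : Fin n →₀ ℕ} (hm : m ∈ p.support) :
    monomial m (1 : k) ∈ I := by
  obtain ⟨S, rfl⟩ := hmon
  obtain ⟨s, hs, hsle⟩ := MvPolynomial.mem_ideal_span_monomial_image.mp hp m hm
  have h1 : monomial m (1 : k) = monomial s (1 : k) * monomial (m - s) 1 := by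
    rw [monomial_mul, one_mul, add_tsub_cancel_of_le hsle]
  rw [h1]
  exact Ideal.mul_mem_right _ _ (Ideal.subset_span ⟨s, hs, rfl⟩)

theorem aux_coeff_single_pow {i j : Fin n} (hij : i ≠ j) (c : ℕ) :
    MvPolynomial.coeff (Finsupp.single j c) ((X i + X j : MvPolynomial (Fin n) k) ^ c) = 1 := by
  rw [add_pow, MvPolynomial.coeff_sum, Finset.sum_eq_single 0]
  · simp [X_pow_eq_monomial, monomial_mul, MvPolynomial.coeff_monomial]
  · intro b hb hb0
    have hne : ¬ (Finsupp.single i b + Finsupp.single j (c - b) = Finsupp.single j c) := by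
      intro hEq
      have h2 := DFunLike.congr_fun hEq i
      rw [Finsupp.add_apply, Finsupp.single_eq_same, Finsupp.single_eq_of_ne' hij.symm,
        Finsupp.single_eq_of_ne' hij.symm] at h2
      exact hb0 (by simpa using h2)
    rw [X_pow_eq_monomial, X_pow_eq_monomial, monomial_mul, one_mul]
    rw [show ((c.choose b : ℕ) : MvPolynomial (Fin n) k) = MvPolynomial.C ((c.choose b : ℕ) : k) by
      exact (map_natCast (MvPolynomial.C : k →+* MvPolynomial (Fin n) k) (c.choose b)).symm]
    rw [mul_comm, MvPolynomial.C_mul_monomial, MvPolynomial.coeff_monomial, if_neg hne]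
  · intro hh; exact absurd (Finset.mem_range.mpr (Nat.succ_pos c)) hh

theorem aux_single_move {I : Ideal (MvPolynomial (Fin n) k)}
    (hmon : IsMonomialIdeal I) (hborel : IsBorelFixed I)
    {D : Fin n →₀ ℕ} (hD : monomial D (1 : k) ∈ I) {i j : Fin n} (hji : j ≤ i) :
    monomial (D.erase i + Finsupp.single j (D i)) (1 : k) ∈ I := by
  rcases eq_or_lt_of_le hji with rfl | hlt
  · rwa [Finsupp.erase_add_single]
  have hij : i ≠ j := (ne_of_lt hlt).symm
  -- the transvection matrix
  set g : Matrix (Fin n) (Fin n) k :=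
    Matrix.of (fun a b => (if a = b then (1 : k) else 0) + (if a = i ∧ b = j then 1 else 0))
    with hg
  have hdiag : ∀ a, g a a = 1 := by
    intro a
    show (if a = a then (1:k) else 0) + (if a = i ∧ a = j then 1 else 0) = 1
    rw [if_pos rfl, if_neg (by rintro ⟨rfl, rfl⟩; exact hij rfl), add_zero]
  have hupper : ∀ a b : Fin n, a < b → g a b = 0 := by
    intro a b hab
    show (if a = b then (1:k) else 0) + (if a = i ∧ b = j then 1 else 0) = 0
    rw [if_neg (ne_of_lt hab), if_neg (by rintro ⟨rfl, rfl⟩; exact absurd hab (not_lt_of_gt hlt)),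
      add_zero]
  have hdet : IsUnit g.det := by
    rw [Matrix.det_of_lowerTriangular g (fun a b hba => hupper a b (OrderDual.toDual_lt_toDual.mp hba))]
    simp [hdiag]
  have hmap := hborel g hdet hupper
  -- the substituted variables
  have hv : ∀ l : Fin n, (∑ m, MvPolynomial.C (g l m) * X m)
      = (X l + if l = i then (X j : MvPolynomial (Fin n) k) else 0) := by
    intro l
    have hterm : ∀ m : Fin n, MvPolynomial.C (g l m) * X m
        = (if m = l then (X m : MvPolynomial (Fin n) k) else 0)
          + (if l = i ∧ m = j then (X m : MvPolynomial (Fin n) k) else 0) := by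
      intro m
      simp only [hg, Matrix.of_apply]
      by_cases h1 : l = m <;> by_cases h2 : l = i ∧ m = j <;>
        simp [h1, h2, eq_comm, map_add, add_mul] <;> tauto
    rw [Finset.sum_congr rfl (fun m _ => hterm m), Finset.sum_add_distrib]
    rw [Finset.sum_ite_eq' Finset.univ l (fun m => (X m : MvPolynomial (Fin n) k))]
    by_cases hl : l = i
    · simp [hl, Finset.sum_ite_eq' Finset.univ j (fun m => (X m : MvPolynomial (Fin n) k))]
    · simp [hl]
  set φ := (aeval (fun i => ∑ j, MvPolynomial.C (g i j) * X j) :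
      MvPolynomial (Fin n) k →ₐ[k] MvPolynomial (Fin n) k) with hφ
  have hφmem : φ (monomial D 1) ∈ I := by
    rw [← hmap]; exact Ideal.mem_map_of_mem _ hD
  -- compute φ (monomial D 1)
  have hexp : φ (monomial D 1)
      = (X i + X j) ^ (D i) * monomial (D.erase i) 1 := by
    rw [hφ, aeval_monomial, map_one, one_mul]
    simp only [hv]
    rw [← Finsupp.mul_prod_erase' D i _ (fun l => pow_zero _)]
    congr 1
    · rw [if_pos rfl]
    · rw [Finsupp.prod_congr (g2 := fun l e => (X l : MvPolynomial (Fin n) k) ^ e)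
        (fun l hl => by rw [if_neg (Finset.mem_erase.mp (by rwa [Finsupp.support_erase] at hl)).1, add_zero])]
      rw [monomial_eq, map_one, one_mul]
  have hcoeff : MvPolynomial.coeff (D.erase i + Finsupp.single j (D i)) (φ (monomial D 1)) = 1 := by
    rw [hexp, add_comm (D.erase i) (Finsupp.single j (D i)), MvPolynomial.coeff_mul_monomial,
      aux_coeff_single_pow hij, mul_one]
  exact aux_mem_of_support hmon hφmem (by
    rw [MvPolynomial.mem_support_iff, hcoeff]; exact one_ne_zero)

theorem aux_mapDomain_move_gen {I : Ideal (MvPolynomial (Fin n) k)}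
    (hmon : IsMonomialIdeal I) (hborel : IsBorelFixed I) :
    ∀ (m : ℕ) (D : Fin n →₀ ℕ) (f : Fin n → Fin n),
      monomial D (1 : k) ∈ I → (∀ i, f i ≤ i) →
      (Finset.univ.filter fun i : Fin n => f i ≠ i).card = m →
      monomial (D.mapDomain f) (1 : k) ∈ I := by
  intro m
  induction m with
  | zero =>
    intro D f hD hf hm
    have hfid : ∀ x : Fin n, f x = x := by
      intro x
      by_contra hx
      have hx2 : x ∈ Finset.univ.filter (fun i : Fin n => f i ≠ i) := by
        simp only [Finset.mem_filter, Finset.mem_univ, true_and]; exact hx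
      rw [Finset.card_eq_zero] at hm
      rw [hm] at hx2
      exact absurd hx2 (Finset.notMem_empty x)
    rw [show f = id from funext hfid, Finsupp.mapDomain_id]
    exact hD
  | succ m ih =>
    intro D f hD hf hm
    set s := Finset.univ.filter (fun i : Fin n => f i ≠ i) with hs
    have hne : s.Nonempty := Finset.card_pos.mp (by rw [hm]; exact Nat.succ_pos m)
    set i := s.min' hne with hidef
    have hmem : i ∈ s := Finset.min'_mem s hne
    have hfi : f i ≠ i := (Finset.mem_filter.mp hmem).2
    have hflt : f i < i := lt_of_le_of_ne (hf i) hfi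
    have hffi : f (f i) = f i := by
      by_contra hx
      have hx2 : f i ∈ s := by
        simp only [hs, Finset.mem_filter, Finset.mem_univ, true_and]; exact hx
      exact absurd (Finset.min'_le s _ hx2) (not_le_of_gt hflt)
    set f' := Function.update f i i with hf'def
    have hf'i : f' i = i := Function.update_self i i f
    have hf'ne : ∀ x, x ≠ i → f' x = f x := fun x hx => Function.update_of_ne hx i f
    have hf' : ∀ x, f' x ≤ x := by
      intro x
      rcases eq_or_ne x i with rfl | hx
      · rw [hf'i]
      · rw [hf'ne x hx]; exact hf x
    have hcard : (Finset.univ.filter fun l : Fin n => f' l ≠ l).card = m := by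
      have hfe : Finset.univ.filter (fun l : Fin n => f' l ≠ l) = s.erase i := by
        ext x
        simp only [Finset.mem_filter, Finset.mem_univ, true_and, Finset.mem_erase, hs]
        constructor
        · intro hx
          rcases eq_or_ne x i with rfl | hxi
          · exact absurd hf'i hx
          · exact ⟨hxi, by rw [hf'ne x hxi] at hx; exact hx⟩
        · rintro ⟨hxi, hx⟩
          rw [hf'ne x hxi]; exact hx
      rw [hfe, Finset.card_erase_of_mem hmem, hm]
      rfl
    have hkey : Finsupp.mapDomain f D
        = Finsupp.mapDomain f' (D.erase i + Finsupp.single (f i) (D i)) := by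
      rw [Finsupp.mapDomain_add, Finsupp.mapDomain_single, hf'ne (f i) hfi, hffi]
      conv_lhs => rw [← Finsupp.erase_add_single i D]
      rw [Finsupp.mapDomain_add, Finsupp.mapDomain_single]
      congr 1
      exact Finsupp.mapDomain_congr (fun x hx => (hf'ne x
        (Finset.mem_erase.mp (by rwa [Finsupp.support_erase] at hx)).1).symm)
    rw [hkey]
    exact ih _ f' (aux_single_move hmon hborel hD (hf i)) hf' hcard

theorem aux_mapDomain_move {I : Ideal (MvPolynomial (Fin n) k)}
    (hmon : IsMonomialIdeal I) (hborel : IsBorelFixed I)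
    {D : Fin n →₀ ℕ} (hD : monomial D (1 : k) ∈ I) (f : Fin n → Fin n) (hf : ∀ i, f i ≤ i) :
    monomial (D.mapDomain f) (1 : k) ∈ I :=
  aux_mapDomain_move_gen hmon hborel _ D f hD hf rfl

theorem aux_homog_fd (t : ℕ) : FiniteDimensional k (homogeneousSubmodule (Fin n) k t) :=
  Submodule.finiteDimensional_of_le (S₂ := restrictTotalDegree (Fin n) k t)
    (fun p hp => (mem_restrictTotalDegree (σ := Fin n) (R := k) (m := t) p).mpr
      ((mem_homogeneousSubmodule t p).mp hp).totalDegree_le)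

end BorelAux

/-- If `dim_k (R/I)_t < |P(x^A)|` for `t = deg x^A`, then `x^A ∈ I`. -/
theorem stmt1 {k : Type*} [Field k] {n : ℕ} (I : Ideal (MvPolynomial (Fin n) k))
    (hmon : IsMonomialIdeal I) (hborel : IsBorelFixed I)
    (A : Fin n →₀ ℕ) (t : ℕ) (ht : monDeg A = t)
    (h : hilb I t < (borelPSet A).ncard) :
    monomial A (1 : k) ∈ I := by
  classical
  by_contra hA
  have hfin : (borelPSet A).Finite := by
    by_contra hinf
    rw [Set.Infinite.ncard hinf] at h
    exact Nat.not_lt_zero _ h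
  have hnotmem : ∀ D ∈ borelPSet A, monomial D (1 : k) ∉ I := by
    rintro D ⟨f, hf, hAD⟩ hDI
    exact hA (by rw [hAD]; exact aux_mapDomain_move hmon hborel hDI f hf)
  have hdeg : ∀ D ∈ borelPSet A, monDeg D = t := by
    rintro D ⟨f, hf, hAD⟩
    rw [← ht, hAD]
    exact (Finsupp.sum_mapDomain_index (h := fun _ e => e) (fun _ => rfl) (fun _ _ _ => rfl)).symm
  set π := Ideal.Quotient.mkₐ k I with hπ
  haveI : FiniteDimensional k (homogeneousSubmodule (Fin n) k t) := aux_homog_fd t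
  set N := (homogeneousSubmodule (Fin n) k t).map π.toLinearMap with hNdef
  have hilbN : hilb I t = Module.finrank k N := rfl
  set sF : Finset (Fin n →₀ ℕ) := hfin.toFinset with hsF
  have hmemN : ∀ D : {x // x ∈ sF}, π (monomial (D : Fin n →₀ ℕ) 1) ∈ N := by
    intro D
    have hDb : (D : Fin n →₀ ℕ) ∈ borelPSet A := hfin.mem_toFinset.mp D.2
    exact ⟨monomial (D : Fin n →₀ ℕ) 1, (mem_homogeneousSubmodule t _).mpr
      (isHomogeneous_monomial _ (hdeg _ hDb)), rfl⟩
  have hli : LinearIndependent k (fun D : {x // x ∈ sF} =>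
      (⟨π (monomial (D : Fin n →₀ ℕ) 1), hmemN D⟩ : N)) := by
    apply LinearIndependent.of_comp N.subtype
    rw [Fintype.linearIndependent_iff]
    intro gc hsum D0
    by_contra hg0
    have hsum' : ∑ D : {x // x ∈ sF}, gc D • π (monomial (D : Fin n →₀ ℕ) 1) = 0 := hsum
    have hπp : π (∑ D : {x // x ∈ sF}, monomial (D : Fin n →₀ ℕ) (gc D)) = 0 := by
      rw [map_sum]
      rw [Finset.sum_congr rfl (fun D _ => by
        rw [show (monomial (D : Fin n →₀ ℕ)) (gc D) = gc D • monomial (D : Fin n →₀ ℕ) (1 : k) by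
          rw [MvPolynomial.smul_monomial, smul_eq_mul, mul_one], map_smul])]
      exact hsum'
    have hp : (∑ D : {x // x ∈ sF}, monomial (D : Fin n →₀ ℕ) (gc D)) ∈ I := by
      rwa [hπ, Ideal.Quotient.mkₐ_eq_mk, Ideal.Quotient.eq_zero_iff_mem] at hπp
    have hc : MvPolynomial.coeff (D0 : Fin n →₀ ℕ)
        (∑ D : {x // x ∈ sF}, monomial (D : Fin n →₀ ℕ) (gc D)) = gc D0 := by
      rw [MvPolynomial.coeff_sum, Finset.sum_eq_single D0]
      · rw [MvPolynomial.coeff_monomial, if_pos rfl]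
      · intro b _ hb
        rw [MvPolynomial.coeff_monomial, if_neg (fun hEq => hb (Subtype.ext hEq))]
      · intro hD0; exact absurd (Finset.mem_univ D0) hD0
    exact hnotmem _ (hfin.mem_toFinset.mp D0.2)
      (aux_mem_of_support hmon hp (by rw [MvPolynomial.mem_support_iff, hc]; exact hg0))
  have hcard := hli.fintype_card_le_finrank
  rw [Fintype.card_coe] at hcard
  have hn2 : (borelPSet A).ncard = sF.card := Set.ncard_eq_toFinset_card _ hfin
  rw [hilbN] at h
  rw [hn2] at h
  exact absurd hcard (not_le_of_gt h)
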